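/- Let p be a probability vector on k ordered real values a_1 < ... < a_k with tail CDF q_c = \sum_{b \ge c} p_b. Fix numbers \hat{p}_1, ..., \hat{p}_k \in [0,1] and \epsilon_1, ..., \epsilon_k \ge 0 with |\hat{p}_c - q_c| \le \epsilon_c for every c \in [k], and let E = E_k be the output of the censored-feedback recursion. Then for every c \in [k], the tail probabilities of E and p at level c differ by at most 2\epsilon_c: |\sum_{j \ge c} E(j) - q_c| \le 2\epsilon_c. In particular, the total variation distance between the binary compressions at a_c of E and of p (the Bernoulli distributions of the indicator 1[X \ge a_c]) is at most 2\epsilon_c. -/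

import Mathlib

open Finset

/-- The censored-feedback recursion. -/
noncomputable def censoredRec (phat eps : ℕ → ℝ) : ℕ → ℕ → ℝ
  | 0 => fun _ => 0
  | 1 => fun b => if b = 1 then 1 else 0
  | (c + 2) => fun b =>
      if b = c + 2 then min (censoredRec phat eps (c + 1) (c + 1)) (phat (c + 2) + eps (c + 2))
      else if b = c + 1 then
        censoredRec phat eps (c + 1) (c + 1)
          - min (censoredRec phat eps (c + 1) (c + 1)) (phat (c + 2) + eps (c + 2))
      else censoredRec phat eps (c + 1) b

lemma censoredRec_tailsum (phat eps : ℕ → ℝ) :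
    ∀ m c : ℕ, 1 ≤ c → c ≤ m →
      ∑ j ∈ Finset.Icc c m, censoredRec phat eps m j = censoredRec phat eps c c := by
  intro m
  induction m with
  | zero => intro c hc hcm; omega
  | succ m ih =>
    intro c hc hcm
    rcases Nat.lt_or_ge c (m + 1) with hlt | hge
    · -- c ≤ m, so m ≥ 1
      have hcm' : c ≤ m := by omega
      obtain ⟨n, rfl⟩ : ∃ n, m = n + 1 := ⟨m - 1, by omega⟩
      -- split off top two terms
      have h1 : Finset.Icc c (n + 2) = insert (n + 2) (Finset.Icc c (n + 1)) := by
        ext x; simp [Finset.mem_Icc]; omega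
      have h2 : Finset.Icc c (n + 1) = insert (n + 1) (Finset.Icc c n) := by
        ext x; simp [Finset.mem_Icc]; omega
      rw [h1, Finset.sum_insert (by simp), h2, Finset.sum_insert (by simp)]
      have hsum : censoredRec phat eps (n + 2) (n + 2)
          + censoredRec phat eps (n + 2) (n + 1) = censoredRec phat eps (n + 1) (n + 1) := by
        simp only [censoredRec]
        norm_num
      have hsame : ∀ j ∈ Finset.Icc c n, censoredRec phat eps (n + 2) j
          = censoredRec phat eps (n + 1) j := by
        intro j hj
        simp only [Finset.mem_Icc] at hj
        have hj1 : j ≠ n + 2 := by omega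
        have hj2 : j ≠ n + 1 := by omega
        simp only [censoredRec, if_neg hj1, if_neg hj2]
      rw [Finset.sum_congr rfl hsame, ← add_assoc, hsum, ← Finset.sum_insert (s := Finset.Icc c n)
        (a := n + 1) (by simp), ← h2]
      exact ih c hc hcm'
    · have : c = m + 1 := by omega
      subst this
      simp

/-- If `|phat_c - q_c| ≤ eps_c` for every `c ∈ [k]`, then the tail
probabilities of the output `E = E_k` of the censored-feedback recursion and of `p` differ
at every level `c` by at most `2 eps_c`; i.e. the total variation distance between the
binary compressions at `a_c` of `E` and of `p` is at most `2 eps_c`. -/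
theorem censoredRec_tail_close
    (k : ℕ) (hk : 1 ≤ k) (a : ℕ → ℝ)
    (ha : ∀ i ∈ Finset.Icc 1 k, ∀ j ∈ Finset.Icc 1 k, i < j → a i < a j)
    (p : ℕ → ℝ)
    (hp : ∀ i ∈ Finset.Icc 1 k, 0 ≤ p i ∧ p i ≤ 1)
    (hp1 : ∑ i ∈ Finset.Icc 1 k, p i = 1)
    (phat eps : ℕ → ℝ)
    (hphat : ∀ c ∈ Finset.Icc 1 k, 0 ≤ phat c ∧ phat c ≤ 1)
    (heps : ∀ c ∈ Finset.Icc 1 k, 0 ≤ eps c)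
    (hclose : ∀ c ∈ Finset.Icc 1 k, |phat c - ∑ b ∈ Finset.Icc c k, p b| ≤ eps c) :
    ∀ c ∈ Finset.Icc 1 k,
      |(∑ j ∈ Finset.Icc c k, censoredRec phat eps k j) - ∑ b ∈ Finset.Icc c k, p b|
        ≤ 2 * eps c := by
  -- diagonal bounds: q c ≤ E_c(c) ≤ q c + 2 eps c for 1 ≤ c ≤ k
  have diag : ∀ n : ℕ, n + 1 ≤ k →
      (∑ b ∈ Finset.Icc (n + 1) k, p b) ≤ censoredRec phat eps (n + 1) (n + 1) ∧
      censoredRec phat eps (n + 1) (n + 1) ≤ (∑ b ∈ Finset.Icc (n + 1) k, p b)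
        + 2 * eps (n + 1) := by
    intro n
    induction n with
    | zero =>
      intro _
      have he1 : 0 ≤ eps 1 := heps 1 (by simp [Finset.mem_Icc, hk])
      refine ⟨?_, ?_⟩ <;> simp [censoredRec, hp1] <;> linarith
    | succ n ih =>
      intro hnk
      have hn1k : n + 1 ≤ k := by omega
      obtain ⟨h1, h2⟩ := ih hn1k
      have hc2 : (n + 2) ∈ Finset.Icc 1 k := by simp [Finset.mem_Icc]; omega
      have hclose2 := hclose (n + 2) hc2
      have heps2 := heps (n + 2) hc2
      rw [abs_sub_le_iff] at hclose2
      -- q (n+1) = p (n+1) + q (n+2)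
      have hqsplit : ∑ b ∈ Finset.Icc (n + 1) k, p b
          = p (n + 1) + ∑ b ∈ Finset.Icc (n + 2) k, p b := by
        rw [Finset.Icc_eq_cons_Ioc hn1k, Finset.sum_cons, ← Finset.Icc_add_one_left_eq_Ioc]; rfl
      have hpn : 0 ≤ p (n + 1) := (hp (n + 1) (by simp [Finset.mem_Icc]; omega)).1
      have hE : censoredRec phat eps (n + 2) (n + 2)
          = min (censoredRec phat eps (n + 1) (n + 1)) (phat (n + 2) + eps (n + 2)) := by
        simp [censoredRec]
      rw [hE]
      constructor
      · apply le_min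
        · rw [hqsplit] at h1; linarith
        · linarith [hclose2.2]
      · calc min (censoredRec phat eps (n + 1) (n + 1)) (phat (n + 2) + eps (n + 2))
            ≤ phat (n + 2) + eps (n + 2) := min_le_right _ _
          _ ≤ (∑ b ∈ Finset.Icc (n + 2) k, p b) + 2 * eps (n + 2) := by
              linarith [hclose2.1]
  intro c hc
  simp only [Finset.mem_Icc] at hc
  obtain ⟨n, rfl⟩ : ∃ n, c = n + 1 := ⟨c - 1, by omega⟩
  obtain ⟨h1, h2⟩ := diag n hc.2
  rw [censoredRec_tailsum phat eps k (n + 1) hc.1 hc.2]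
  have heps' := heps (n + 1) (by simp [Finset.mem_Icc]; omega)
  rw [abs_le]
  constructor <;> linarith
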